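/- For each u ∈ [0,∞), the curve γ_u defined by γ_u(s) = (s, s) for 0 ≤ s ≤ u and γ_u(s) = (s + f⁻¹(s − u), s) for s ≥ u is a Lipschitz null curve for the metric g = −dt² + (1 + sqrt((t − |x|)₊))dx², i.e., it satisfies −α'(s)² + ρ(γ_u(s))·β'(s)² = 0 almost everywhere. -/

import Mathlib

noncomputable def rho (t x : ℝ) : ℝ := 1 + Real.sqrt (max (t - |x|) 0)

noncomputable def f (y : ℝ) : ℝ :=
  4 / 3 * ((1 + Real.sqrt y) ^ ((3 : ℝ) / 2) - 1) + 2 * Real.sqrt y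

open Real MeasureTheory Set Filter

lemma f_zero : f 0 = 0 := by
  simp [f, Real.sqrt_zero, Real.one_rpow]

lemma f_strictMonoOn : StrictMonoOn f (Set.Ici 0) := by
  intro a ha b hb hab
  have h1 : Real.sqrt a < Real.sqrt b := Real.sqrt_lt_sqrt ha hab
  have h2 : (1 + Real.sqrt a) ^ ((3:ℝ)/2) < (1 + Real.sqrt b) ^ ((3:ℝ)/2) :=
    Real.rpow_lt_rpow (by positivity) (by linarith) (by norm_num)
  unfold f; nlinarith

lemma f_mono : MonotoneOn f (Set.Ici 0) := f_strictMonoOn.monotoneOn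

lemma f_nonneg {t : ℝ} (ht : 0 ≤ t) : 0 ≤ f t := by
  have := f_mono Set.self_mem_Ici ht ht
  rw [f_zero] at this; exact this

lemma f_hasDerivAt {t : ℝ} (ht : 0 < t) :
    HasDerivAt f ((Real.sqrt (1 + Real.sqrt t) + 1) / Real.sqrt t) t := by
  have hst : 0 < Real.sqrt t := Real.sqrt_pos.2 ht
  have hs : HasDerivAt Real.sqrt (1 / (2 * Real.sqrt t)) t := Real.hasDerivAt_sqrt (ne_of_gt ht)
  have h1 : HasDerivAt (fun y => 1 + Real.sqrt y) (1 / (2 * Real.sqrt t)) t := hs.const_add 1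
  have hpos : (0:ℝ) < 1 + Real.sqrt t := by positivity
  have h2 := h1.rpow_const (p := (3:ℝ)/2) (Or.inl (ne_of_gt hpos))
  have h3 := ((h2.sub_const 1).const_mul ((4:ℝ)/3)).add (hs.const_mul 2)
  have hrw : (1 + Real.sqrt t) ^ ((3:ℝ)/2 - 1) = Real.sqrt (1 + Real.sqrt t) := by
    rw [show (3:ℝ)/2 - 1 = 1/2 by norm_num, ← Real.sqrt_eq_rpow]
  convert h3 using 1
  · rfl
  · rfl
  · rfl
  rw [hrw, div_eq_iff (ne_of_gt hst)]
  field_simp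
  ring

lemma f_diff_lower {t1 t2 M : ℝ} (h1 : 0 ≤ t1) (h12 : t1 ≤ t2) (h2M : t2 ≤ M) :
    t2 - t1 ≤ Real.sqrt M * (f t2 - f t1) := by
  have h2 : 0 ≤ t2 := h1.trans h12
  have hs : Real.sqrt t1 ≤ Real.sqrt t2 := Real.sqrt_le_sqrt h12
  have hfd : 2 * (Real.sqrt t2 - Real.sqrt t1) ≤ f t2 - f t1 := by
    have hr : (1 + Real.sqrt t1) ^ ((3:ℝ)/2) ≤ (1 + Real.sqrt t2) ^ ((3:ℝ)/2) :=
      Real.rpow_le_rpow (by positivity) (by linarith) (by norm_num)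
    unfold f; linarith
  have e1 : Real.sqrt t1 * Real.sqrt t1 = t1 := Real.mul_self_sqrt h1
  have e2 : Real.sqrt t2 * Real.sqrt t2 = t2 := Real.mul_self_sqrt h2
  have hb1 : Real.sqrt t1 ≤ Real.sqrt M := Real.sqrt_le_sqrt (h12.trans h2M)
  have hb2 : Real.sqrt t2 ≤ Real.sqrt M := Real.sqrt_le_sqrt h2M
  nlinarith [Real.sqrt_nonneg M, Real.sqrt_nonneg t1, Real.sqrt_nonneg t2]

section Finv

variable {finv : ℝ → ℝ}

lemma finv_zero (h_left : ∀ t ∈ Set.Ici (0 : ℝ), finv (f t) = t) : finv 0 = 0 := by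
  have := h_left 0 Set.self_mem_Ici
  rwa [f_zero] at this

lemma finv_mono (h_nonneg : ∀ s ∈ Set.Ici (0 : ℝ), finv s ∈ Set.Ici (0 : ℝ))
    (h_right : ∀ s ∈ Set.Ici (0 : ℝ), f (finv s) = s)
    {y1 y2 : ℝ} (hy1 : 0 ≤ y1) (h12 : y1 ≤ y2) : finv y1 ≤ finv y2 := by
  by_contra h
  push_neg at h
  have h1 := h_nonneg y1 hy1
  have h2 := h_nonneg y2 (hy1.trans h12)
  have := f_strictMonoOn h2 h1 h
  rw [h_right y1 hy1, h_right y2 (hy1.trans h12)] at this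
  linarith

lemma finv_pos (h_nonneg : ∀ s ∈ Set.Ici (0 : ℝ), finv s ∈ Set.Ici (0 : ℝ))
    (h_right : ∀ s ∈ Set.Ici (0 : ℝ), f (finv s) = s)
    {y : ℝ} (hy : 0 < y) : 0 < finv y := by
  rcases lt_or_eq_of_le (Set.mem_Ici.1 (h_nonneg y hy.le)) with h | h
  · exact h
  · exfalso
    have := h_right y hy.le
    rw [← h, f_zero] at this
    linarith

lemma finv_lip (h_nonneg : ∀ s ∈ Set.Ici (0 : ℝ), finv s ∈ Set.Ici (0 : ℝ))
    (h_right : ∀ s ∈ Set.Ici (0 : ℝ), f (finv s) = s)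
    {T y1 y2 : ℝ} (hy1 : 0 ≤ y1) (h12 : y1 ≤ y2) (h2T : y2 ≤ T) :
    finv y2 - finv y1 ≤ Real.sqrt (finv T) * (y2 - y1) := by
  have hy2 : 0 ≤ y2 := hy1.trans h12
  have hT : 0 ≤ T := hy2.trans h2T
  have h1 := h_nonneg y1 hy1
  have hm12 : finv y1 ≤ finv y2 := finv_mono h_nonneg h_right hy1 h12
  have hm2T : finv y2 ≤ finv T := finv_mono h_nonneg h_right hy2 h2T
  have := f_diff_lower h1 hm12 hm2T
  rwa [h_right y1 hy1, h_right y2 hy2] at this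

lemma finv_continuousAt (h_nonneg : ∀ s ∈ Set.Ici (0 : ℝ), finv s ∈ Set.Ici (0 : ℝ))
    (h_right : ∀ s ∈ Set.Ici (0 : ℝ), f (finv s) = s)
    {y0 : ℝ} (hy0 : 0 < y0) : ContinuousAt finv y0 := by
  rw [Metric.continuousAt_iff]
  intro ε hε
  set t0 := finv y0 with ht0def
  have ht0 : 0 < t0 := finv_pos h_nonneg h_right hy0
  set ε' := min (ε / 2) (t0 / 2) with hε'def
  have hε' : 0 < ε' := lt_min (by linarith) (by linarith)
  have hε'ε : ε' < ε := lt_of_le_of_lt (min_le_left _ _) (by linarith)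
  have hε't0 : ε' ≤ t0 / 2 := min_le_right _ _
  have hsub : 0 ≤ t0 - ε' := by linarith
  have hy0eq : f t0 = y0 := h_right y0 hy0.le
  have hlt1 : f (t0 - ε') < y0 := by
    rw [← hy0eq]; exact f_strictMonoOn (Set.mem_Ici.2 hsub) (Set.mem_Ici.2 ht0.le) (by linarith)
  have hlt2 : y0 < f (t0 + ε') := by
    rw [← hy0eq]; exact f_strictMonoOn (Set.mem_Ici.2 ht0.le) (Set.mem_Ici.2 (by linarith)) (by linarith)
  refine ⟨min (f (t0 + ε') - y0) (y0 - f (t0 - ε')), lt_min (by linarith) (by linarith), ?_⟩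
  intro y hy
  rw [Real.dist_eq, abs_lt] at hy
  obtain ⟨hyl, hyr⟩ := hy
  have h1 : f (t0 - ε') < y := by
    have := min_le_right (f (t0 + ε') - y0) (y0 - f (t0 - ε'))
    linarith
  have h2 : y < f (t0 + ε') := by
    have := min_le_left (f (t0 + ε') - y0) (y0 - f (t0 - ε'))
    linarith
  have hy_nonneg : 0 ≤ y := le_trans (f_nonneg hsub) h1.le
  have hfy := h_right y hy_nonneg
  have hfyn := h_nonneg y hy_nonneg
  have hub : finv y < t0 + ε' := by
    by_contra h
    push_neg at h
    have := f_mono (Set.mem_Ici.2 (by linarith : (0:ℝ) ≤ t0 + ε')) hfyn h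
    rw [hfy] at this
    linarith
  have hlb : t0 - ε' < finv y := by
    by_contra h
    push_neg at h
    have := f_mono hfyn (Set.mem_Ici.2 hsub) h
    rw [hfy] at this
    linarith
  rw [Real.dist_eq, abs_lt]
  constructor <;> [linarith; linarith]

lemma finv_hasDerivAt (h_nonneg : ∀ s ∈ Set.Ici (0 : ℝ), finv s ∈ Set.Ici (0 : ℝ))
    (h_right : ∀ s ∈ Set.Ici (0 : ℝ), f (finv s) = s)
    {y0 : ℝ} (hy0 : 0 < y0) :
    HasDerivAt finv
      (Real.sqrt (finv y0) / (Real.sqrt (1 + Real.sqrt (finv y0)) + 1)) y0 := by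
  have ht0 : 0 < finv y0 := finv_pos h_nonneg h_right hy0
  have hf := f_hasDerivAt ht0
  have hne : (Real.sqrt (1 + Real.sqrt (finv y0)) + 1) / Real.sqrt (finv y0) ≠ 0 := by
    positivity
  have hev : ∀ᶠ y in nhds y0, f (finv y) = y := by
    filter_upwards [Ioi_mem_nhds hy0] with y hy
    exact h_right y (Set.mem_Ici.2 (le_of_lt hy))
  have := HasDerivAt.of_local_left_inverse (finv_continuousAt h_nonneg h_right hy0) hf hne hev
  rwa [inv_div] at this

end Finv

/-- for each u ∈ [0,∞), the curve γ_u(s) = (s,s) for s ≤ u and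
(s + f⁻¹(s−u), s) for s ≥ u is a Lipschitz null curve for g = −dt² + ρ dx²:
−α'² + ρ(γ_u)·β'² = 0 almost everywhere. -/
theorem gamma_u_lipschitz_null (finv : ℝ → ℝ)
    (h_nonneg : ∀ s ∈ Set.Ici (0 : ℝ), finv s ∈ Set.Ici (0 : ℝ))
    (h_left : ∀ t ∈ Set.Ici (0 : ℝ), finv (f t) = t)
    (h_right : ∀ s ∈ Set.Ici (0 : ℝ), f (finv s) = s) :
    ∀ u : ℝ, 0 ≤ u →
      (∀ T : ℝ, 0 < T → ∃ K : NNReal,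
        LipschitzOnWith K
          (fun s : ℝ => ((if s ≤ u then s else s + finv (s - u), s) : ℝ × ℝ))
          (Set.Icc 0 T)) ∧
      (∀ᵐ s ∂(MeasureTheory.volume.restrict (Set.Ioi (0 : ℝ))),
        -(deriv (fun s : ℝ => if s ≤ u then s else s + finv (s - u)) s) ^ 2 +
          rho (if s ≤ u then s else s + finv (s - u)) s *
            (deriv (fun s : ℝ => s) s) ^ 2 = 0) := by
  intro u hu
  constructor
  · -- Lipschitz part
    intro T hT
    set C : ℝ := Real.sqrt (finv T) with hCdef
    have hC : 0 ≤ C := Real.sqrt_nonneg _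
    refine ⟨(1 + C).toNNReal, ?_⟩
    have heq : ∀ s : ℝ, (if s ≤ u then s else s + finv (s - u)) = s + finv (max (s - u) 0) := by
      intro s
      split_ifs with h
      · rw [max_eq_right (by linarith), finv_zero h_left, add_zero]
      · rw [max_eq_left (by linarith [not_le.1 h])]
    have hfl : ∀ y1 ∈ Set.Icc (0:ℝ) T, ∀ y2 ∈ Set.Icc (0:ℝ) T,
        |finv y2 - finv y1| ≤ C * |y2 - y1| := by
      intro y1 hy1 y2 hy2
      rcases le_total y1 y2 with h | h
      · have hd : 0 ≤ finv y2 - finv y1 := by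
          linarith [finv_mono h_nonneg h_right hy1.1 h]
        rw [abs_of_nonneg hd, abs_of_nonneg (by linarith)]
        exact finv_lip h_nonneg h_right hy1.1 h hy2.2
      · have hd : 0 ≤ finv y1 - finv y2 := by
          linarith [finv_mono h_nonneg h_right hy2.1 h]
        rw [abs_sub_comm, abs_sub_comm y2 y1, abs_of_nonneg hd, abs_of_nonneg (by linarith)]
        exact finv_lip h_nonneg h_right hy2.1 h hy1.2
    rw [lipschitzOnWith_iff_dist_le_mul]
    intro x hx y hy
    rw [Prod.dist_eq]
    rw [Real.coe_toNNReal _ (by positivity)]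
    have hdist : dist x y ≤ (1 + C) * dist x y := by
      nlinarith [dist_nonneg (x := x) (y := y)]
    refine max_le ?_ hdist
    rw [heq x, heq y, Real.dist_eq, Real.dist_eq]
    have hmx : max (x - u) 0 ∈ Set.Icc (0:ℝ) T :=
      ⟨le_max_right _ _, max_le (by linarith [hx.2]) (by linarith [hT])⟩
    have hmy : max (y - u) 0 ∈ Set.Icc (0:ℝ) T :=
      ⟨le_max_right _ _, max_le (by linarith [hy.2]) (by linarith [hT])⟩
    have h1 : |finv (max (x - u) 0) - finv (max (y - u) 0)| ≤ C * |x - y| := by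
      have := hfl _ hmy _ hmx
      have hmax : |max (x - u) 0 - max (y - u) 0| ≤ |(x - u) - (y - u)| :=
        abs_max_sub_max_le_abs _ _ _
      have : |finv (max (x - u) 0) - finv (max (y - u) 0)| ≤ C * |max (x - u) 0 - max (y - u) 0| :=
        this
      calc |finv (max (x - u) 0) - finv (max (y - u) 0)|
          ≤ C * |max (x - u) 0 - max (y - u) 0| := this
        _ ≤ C * |(x - u) - (y - u)| := by
            apply mul_le_mul_of_nonneg_left hmax hC
        _ = C * |x - y| := by ring_nf
    calc |x + finv (max (x - u) 0) - (y + finv (max (y - u) 0))|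
        ≤ |x - y| + |finv (max (x - u) 0) - finv (max (y - u) 0)| := by
          have := abs_add_le (x - y) (finv (max (x - u) 0) - finv (max (y - u) 0))
          calc |x + finv (max (x - u) 0) - (y + finv (max (y - u) 0))|
              = |(x - y) + (finv (max (x - u) 0) - finv (max (y - u) 0))| := by ring_nf
            _ ≤ _ := this
      _ ≤ |x - y| + C * |x - y| := by linarith
      _ = (1 + C) * |x - y| := by ring
  · -- null a.e. part
    have h0 : ∀ᵐ s ∂(volume.restrict (Set.Ioi (0:ℝ))), s ∈ Set.Ioi (0:ℝ) :=
      ae_restrict_mem measurableSet_Ioi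
    have h1 : ∀ᵐ s ∂(volume.restrict (Set.Ioi (0:ℝ))), s ≠ u := by
      apply ae_restrict_of_ae
      rw [ae_iff]
      have : {s : ℝ | ¬ s ≠ u} = {u} := by ext s; simp
      rw [this]
      exact measure_singleton u
    filter_upwards [h0, h1] with s hs hsu
    rw [Set.mem_Ioi] at hs
    rw [deriv_id'']
    rcases lt_or_gt_of_ne hsu with hlt | hgt
    · -- s < u
      have hev : (fun s' : ℝ => if s' ≤ u then s' else s' + finv (s' - u)) =ᶠ[nhds s]
          (fun s' : ℝ => s') := by
        filter_upwards [Iio_mem_nhds hlt] with x hx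
        rw [if_pos (le_of_lt hx)]
      rw [hev.deriv_eq, deriv_id'', if_pos hlt.le]
      have hrho : rho s s = 1 := by
        simp [rho, abs_of_pos hs]
      rw [hrho]; ring
    · -- s > u
      have hy0 : 0 < s - u := by linarith
      set t0 : ℝ := finv (s - u) with ht0def
      have ht0 : 0 < t0 := finv_pos h_nonneg h_right hy0
      set a : ℝ := Real.sqrt (1 + Real.sqrt t0) with hadef
      have ha2 : a ^ 2 = 1 + Real.sqrt t0 := Real.sq_sqrt (by positivity)
      have ha1 : 1 ≤ a := by
        nlinarith [Real.sqrt_nonneg t0, Real.sqrt_nonneg (1 + Real.sqrt t0)]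
      have hfd := finv_hasDerivAt h_nonneg h_right hy0
      have hsub : HasDerivAt (fun x : ℝ => x - u) 1 s := (hasDerivAt_id s).sub_const u
      have hcomp : HasDerivAt (fun x : ℝ => finv (x - u))
          (Real.sqrt t0 / (Real.sqrt (1 + Real.sqrt t0) + 1)) s := by
        have := hfd.comp s hsub
        simpa [Function.comp_def] using this
      have hadd : HasDerivAt (fun x : ℝ => x + finv (x - u))
          (1 + Real.sqrt t0 / (Real.sqrt (1 + Real.sqrt t0) + 1)) s :=
        (hasDerivAt_id s).add hcomp
      have hval : 1 + Real.sqrt t0 / (Real.sqrt (1 + Real.sqrt t0) + 1) = a := by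
        rw [hadef]
        have hne : Real.sqrt (1 + Real.sqrt t0) + 1 ≠ 0 := by positivity
        field_simp
        nlinarith [ha2]
      rw [hval] at hadd
      have hev : (fun s' : ℝ => if s' ≤ u then s' else s' + finv (s' - u)) =ᶠ[nhds s]
          (fun s' : ℝ => s' + finv (s' - u)) := by
        filter_upwards [Ioi_mem_nhds hgt] with x hx
        rw [if_neg (not_le.2 hx)]
      rw [hev.deriv_eq, hadd.deriv, if_neg (not_le.2 hgt)]
      have hrho : rho (s + finv (s - u)) s = a ^ 2 := by
        rw [rho, abs_of_pos hs]
        have : s + finv (s - u) - s = t0 := by rw [ht0def]; ring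
        rw [this, max_eq_left ht0.le, ha2]
      rw [hrho]; ring
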